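/- Let G be a symmetric positive semidefinite n×n integer matrix. Suppose φ : ℂ × ℂⁿ → ℂ is holomorphic on Ω = {(τ,z) : Im τ > 0} and satisfies, for all x, y ∈ ℤⁿ and all (τ,z) ∈ Ω, the elliptic transformation law φ(τ, z + τ·x + y) · exp(πi·τ·xᵀGx + 2πi·xᵀGz) = exp(πi·(x+y)ᵀG(x+y)) · φ(τ, z). Then φ(τ,z) depends on z only modulo the complex span of the radical: for every x₀ ∈ ℤⁿ with Gx₀ = 0, every c ∈ ℂ and every (τ,z) ∈ Ω one has φ(τ, z + c·x₀) = φ(τ, z). -/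

import Mathlib

open Matrix

/-- If a holomorphic function `φ` on `ℍ × ℂⁿ` satisfies the elliptic
transformation law of Jacobi forms with respect to a symmetric positive
semidefinite integer matrix `G`, then `φ(τ,z)` depends on `z` only modulo the
complex span of the radical `{x ∈ ℤⁿ : Gx = 0}`. -/
theorem invariant_along_radical_of_elliptic_transformation
    {n : ℕ} (G : Matrix (Fin n) (Fin n) ℤ) (hG : G.IsSymm)
    (hpsd : ∀ v : Fin n → ℝ, 0 ≤ v ⬝ᵥ (G.map (Int.cast : ℤ → ℝ)).mulVec v)
    (φ : ℂ × (Fin n → ℂ) → ℂ)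
    (hol : DifferentiableOn ℂ φ {p : ℂ × (Fin n → ℂ) | 0 < p.1.im})
    (hell : ∀ (x y : Fin n → ℤ) (τ : ℂ) (z : Fin n → ℂ), 0 < τ.im →
      φ (τ, z + τ • (fun i => (x i : ℂ)) + (fun i => (y i : ℂ))) *
          Complex.exp ((Real.pi : ℂ) * Complex.I * τ * (((x ⬝ᵥ G.mulVec x) : ℤ) : ℂ)
            + 2 * (Real.pi : ℂ) * Complex.I *
              ((fun i => (x i : ℂ)) ⬝ᵥ (G.map (Int.cast : ℤ → ℂ)).mulVec z)) =
        Complex.exp ((Real.pi : ℂ) * Complex.I *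
            ((((x + y) ⬝ᵥ G.mulVec (x + y)) : ℤ) : ℂ)) * φ (τ, z)) :
    ∀ (x₀ : Fin n → ℤ), G.mulVec x₀ = 0 →
      ∀ (c : ℂ) (τ : ℂ) (z : Fin n → ℂ), 0 < τ.im →
        φ (τ, z + c • (fun i => (x₀ i : ℂ))) = φ (τ, z) := by
  intro x₀ h0 c τ z hτ
  set v : Fin n → ℂ := fun i => (x₀ i : ℂ) with hv
  have hq : x₀ ⬝ᵥ G.mulVec x₀ = 0 := by rw [h0]; simp
  have hGv : (G.map (Int.cast : ℤ → ℂ)).mulVec v = 0 := by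
    funext i
    have h := congrFun h0 i
    simp only [Matrix.mulVec, dotProduct, Pi.zero_apply] at h ⊢
    simp only [Matrix.map_apply, hv]
    push_cast
    exact_mod_cast congrArg (Int.cast : ℤ → ℂ) h
  have hsymm : (G.map (Int.cast : ℤ → ℂ)).IsSymm := hG.map _
  have hdot : ∀ w : Fin n → ℂ, v ⬝ᵥ (G.map (Int.cast : ℤ → ℂ)).mulVec w = 0 := by
    intro w
    rw [Matrix.dotProduct_mulVec]
    have : Matrix.vecMul v (G.map (Int.cast : ℤ → ℂ)) = 0 := by
      rw [← Matrix.mulVec_transpose, hsymm.eq, hGv]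
    rw [this, zero_dotProduct]
  -- period τ • v
  have hA : ∀ w : Fin n → ℂ, φ (τ, w + τ • v) = φ (τ, w) := by
    intro w
    have h := hell x₀ 0 τ w hτ
    have hz : (fun i => ((0 : Fin n → ℤ) i : ℂ)) = (0 : Fin n → ℂ) := by
      funext i; simp
    rw [hz] at h
    simp only [hq, hdot, Int.cast_zero, Pi.zero_apply, add_zero, mul_zero,
      Complex.exp_zero, mul_one, one_mul] at h
    rw [← hv] at h; simpa [hdot] using h
  -- period v
  have hB : ∀ w : Fin n → ℂ, φ (τ, w + v) = φ (τ, w) := by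
    intro w
    have h := hell 0 x₀ τ w hτ
    have hz : (fun i => ((0 : Fin n → ℤ) i : ℂ)) = (0 : Fin n → ℂ) := by
      funext i; simp
    rw [hz] at h
    simp only [zero_dotProduct, dotProduct_zero, Matrix.mulVec_zero,
      zero_add, smul_zero, add_zero, Int.cast_zero, mul_zero, zero_mul,
      Complex.exp_zero, mul_one, one_mul, hq] at h
    exact h
  -- the function of one complex variable
  set f : ℂ → ℂ := fun s => φ (τ, z + s • v) with hf
  have hopen : IsOpen {p : ℂ × (Fin n → ℂ) | 0 < p.1.im} :=
    isOpen_lt continuous_const (Complex.continuous_im.comp continuous_fst)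
  have hdiff : Differentiable ℂ f := by
    intro s
    have hg : DifferentiableAt ℂ (fun s : ℂ => ((τ, z + s • v) : ℂ × (Fin n → ℂ))) s := by
      apply DifferentiableAt.prodMk (differentiableAt_const _)
      exact (differentiableAt_const _).add (differentiableAt_id.smul_const v)
    have hφ : DifferentiableAt ℂ φ (τ, z + s • v) :=
      (hol.differentiableAt (hopen.mem_nhds (by simpa using hτ)))
    exact hφ.comp s hg
  have h1 : Function.Periodic f 1 := by
    intro s
    have := hB (z + s • v)
    simpa [hf, add_smul, one_smul, add_assoc] using this
  have hT : Function.Periodic f τ := by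
    intro s
    have := hA (z + s • v)
    simpa [hf, add_smul, add_assoc] using this
  -- boundedness via fundamental domain
  have hτ0 : τ.im ≠ 0 := ne_of_gt hτ
  set K : Set ℂ := (fun p : ℝ × ℝ => ((p.1 : ℂ) + (p.2 : ℂ) * τ)) ''
      (Set.Icc (0:ℝ) 1 ×ˢ Set.Icc (0:ℝ) 1) with hK
  have hKc : IsCompact K := by
    apply (isCompact_Icc.prod isCompact_Icc).image
    continuity
  have hsub : Set.range f ⊆ f '' K := by
    rintro _ ⟨s, rfl⟩
    set b : ℝ := s.im / τ.im with hb
    set a : ℝ := s.re - b * τ.re with ha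
    have hs : s = (a : ℂ) + (b : ℂ) * τ := by
      apply Complex.ext <;> simp [ha, hb, div_mul_cancel₀, hτ0]
    have hdecomp : s = ((↑(Int.fract a) : ℂ) + (↑(Int.fract b) : ℂ) * τ)
        + (⌊b⌋ : ℤ) * τ + (⌊a⌋ : ℤ) * (1 : ℂ) := by
      rw [hs]
      have ha' : (a : ℂ) = (↑(Int.fract a) : ℂ) + (⌊a⌋ : ℤ) := by
        rw [Int.fract]; push_cast; ring
      have hb' : (b : ℂ) = (↑(Int.fract b) : ℂ) + (⌊b⌋ : ℤ) := by
        rw [Int.fract]; push_cast; ring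
      rw [ha', hb']; ring
    have : f s = f ((↑(Int.fract a) : ℂ) + (↑(Int.fract b) : ℂ) * τ) := by
      rw [hdecomp, h1.int_mul ⌊a⌋, hT.int_mul ⌊b⌋]
    rw [this]
    refine ⟨_, ⟨(Int.fract a, Int.fract b), ⟨⟨?_, ?_⟩, ?_, ?_⟩, rfl⟩, rfl⟩
    · exact Int.fract_nonneg a
    · exact (Int.fract_lt_one a).le
    · exact Int.fract_nonneg b
    · exact (Int.fract_lt_one b).le
  have hbdd : Bornology.IsBounded (Set.range f) :=
    ((hKc.image hdiff.continuous).isBounded).subset hsub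
  have := hdiff.apply_eq_apply_of_bounded hbdd c 0
  simpa [hf] using this
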